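/- arXiv:1208.3160 — 3 statements merged into one kernel-verified Lean document; each statement's English description precedes it below -/
import Mathlib

section
/- For every real n×n matrix B there exist subsets S, T of {1,...,n} such that the matrix obtained from B by multiplying each column with index in S by -1 and each row with index in T by -1 (entries at the intersection of a flipped row and flipped column keep their original sign) has all row sums and all column sums nonnegative. -/
open Matrix Finset

/-- Sign-flip diagonal matrix: `-1` on indices in `S`, `1` elsewhere. -/
noncomputable def signMat {n : ℕ} (S : Finset (Fin n)) : Matrix (Fin n) (Fin n) ℝ :=
  Matrix.diagonal (fun i => if i ∈ S then (-1 : ℝ) else 1)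

private lemma flip_sum_aux {n : ℕ} (e g : Fin n → ℝ) (i₀ : Fin n) :
    ∑ i, (if i = i₀ then -e i else e i) * g i
      = (∑ i, e i * g i) - 2 * (e i₀ * g i₀) := by
  have h : ∀ i : Fin n, (if i = i₀ then -e i else e i) * g i
      = e i * g i + (if i = i₀ then -2 * (e i₀ * g i₀) else 0) := by
    intro i; by_cases h : i = i₀ <;> simp [h] <;> ring
  rw [Finset.sum_congr rfl (fun i _ => h i), Finset.sum_add_distrib]
  simp [Finset.sum_ite_eq']
  ring

private lemma flip_mem {n : ℕ} (T : Finset (Fin n)) (i₀ i : Fin n) :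
    (if i ∈ (if i₀ ∈ T then T.erase i₀ else insert i₀ T) then (-1 : ℝ) else 1)
      = if i = i₀ then -(if i ∈ T then (-1 : ℝ) else 1) else (if i ∈ T then (-1:ℝ) else 1) := by
  by_cases h0 : i₀ ∈ T <;> by_cases hi : i = i₀ <;> by_cases hT : i ∈ T <;>
    simp_all [Finset.mem_erase, Finset.mem_insert]

theorem exists_flip_nonneg_sums (n : ℕ) (B : Matrix (Fin n) (Fin n) ℝ) :
    ∃ S T : Finset (Fin n),
      (∀ i, 0 ≤ ∑ j, (signMat T * B * signMat S) i j) ∧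
      (∀ j, 0 ≤ ∑ i, (signMat T * B * signMat S) i j) := by
  classical
  set e : Finset (Fin n) → Fin n → ℝ := fun S i => if i ∈ S then (-1:ℝ) else 1 with he
  have entry : ∀ (S T : Finset (Fin n)) i j,
      (signMat T * B * signMat S) i j = e T i * B i j * e S j := by
    intro S T i j
    simp [signMat, Matrix.mul_diagonal, Matrix.diagonal_mul, he, mul_comm, mul_assoc]
  set F : Finset (Fin n) × Finset (Fin n) → ℝ :=
    fun p => ∑ i, ∑ j, e p.2 i * B i j * e p.1 j with hF
  obtain ⟨p, -, hp⟩ := Finset.exists_max_image (Finset.univ :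
      Finset (Finset (Fin n) × Finset (Fin n))) F ⟨(∅, ∅), Finset.mem_univ _⟩
  obtain ⟨S, T⟩ := p
  refine ⟨S, T, ?_, ?_⟩
  · intro i₀
    by_contra hneg
    push_neg at hneg
    have hrow : e T i₀ * (∑ j, B i₀ j * e S j) < 0 := by
      have : ∑ j, (signMat T * B * signMat S) i₀ j
          = e T i₀ * (∑ j, B i₀ j * e S j) := by
        rw [Finset.mul_sum]
        exact Finset.sum_congr rfl fun j _ => by rw [entry]; ring
      linarith [this ▸ hneg]
    set T' := if i₀ ∈ T then T.erase i₀ else insert i₀ T with hT'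
    have key : F (S, T') = F (S, T) - 2 * (e T i₀ * (∑ j, B i₀ j * e S j)) := by
      have h1 : ∀ i, e T' i = if i = i₀ then -e T i else e T i := fun i => flip_mem T i₀ i
      have h2 : F (S, T') = ∑ i, (if i = i₀ then -e T i else e T i) * (∑ j, B i j * e S j) := by
        simp only [hF]
        refine Finset.sum_congr rfl fun i _ => ?_
        rw [h1 i, Finset.mul_sum]
        exact Finset.sum_congr rfl fun j _ => by ring
      have h3 : F (S, T) = ∑ i, e T i * (∑ j, B i j * e S j) := by
        simp only [hF]
        refine Finset.sum_congr rfl fun i _ => ?_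
        rw [Finset.mul_sum]
        exact Finset.sum_congr rfl fun j _ => by ring
      rw [h2, h3, flip_sum_aux]
    have := hp (S, T') (Finset.mem_univ _)
    rw [key] at this
    linarith
  · intro j₀
    by_contra hneg
    push_neg at hneg
    have hcol : e S j₀ * (∑ i, B i j₀ * e T i) < 0 := by
      have : ∑ i, (signMat T * B * signMat S) i j₀
          = e S j₀ * (∑ i, B i j₀ * e T i) := by
        rw [Finset.mul_sum]
        exact Finset.sum_congr rfl fun i _ => by rw [entry]; ring
      linarith [this ▸ hneg]
    set S' := if j₀ ∈ S then S.erase j₀ else insert j₀ S with hS'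
    have key : F (S', T) = F (S, T) - 2 * (e S j₀ * (∑ i, B i j₀ * e T i)) := by
      have h1 : ∀ j, e S' j = if j = j₀ then -e S j else e S j := fun j => flip_mem S j₀ j
      have h2 : F (S', T) = ∑ j, (if j = j₀ then -e S j else e S j) * (∑ i, B i j * e T i) := by
        simp only [hF]
        rw [Finset.sum_comm]
        refine Finset.sum_congr rfl fun j _ => ?_
        rw [h1 j, Finset.mul_sum]
        exact Finset.sum_congr rfl fun i _ => by ring
      have h3 : F (S, T) = ∑ j, e S j * (∑ i, B i j * e T i) := by
        simp only [hF]
        rw [Finset.sum_comm]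
        refine Finset.sum_congr rfl fun j _ => ?_
        rw [Finset.mul_sum]
        exact Finset.sum_congr rfl fun i _ => by ring
      rw [h2, h3, flip_sum_aux]
    have := hp (S', T) (Finset.mem_univ _)
    rw [key] at this
    linarith
end

section
/- Let the entries of an n×n random matrix B be i.i.d. uniform on [-1,1]. Then the probability that B is invertible and B⁻¹ has all row sums and all column sums positive is at least 2^{-(2n-1)}. -/
open Finset Matrix MeasureTheory

/-- The uniform probability measure on `[-1, 1]`. -/
noncomputable def unifMeasure : Measure ℝ :=
  (2 : ENNReal)⁻¹ • volume.restrict (Set.Icc (-1 : ℝ) 1)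

instance : IsProbabilityMeasure unifMeasure := by
  constructor
  rw [unifMeasure, Measure.smul_apply, Measure.restrict_apply MeasurableSet.univ,
    Set.univ_inter, Real.volume_Icc]
  norm_num
  exact ENNReal.inv_mul_cancel (by norm_num) (by norm_num)

instance matrixMeasurableSpace (m n : ℕ) : MeasurableSpace (Matrix (Fin m) (Fin n) ℝ) :=
  MeasurableSpace.pi

/-- The law of an `n × n` random matrix with i.i.d. entries uniform on `[-1,1]`. -/
noncomputable def matrixMeasure (n : ℕ) : Measure (Matrix (Fin n) (Fin n) ℝ) :=
  Measure.pi fun _ : Fin n => Measure.pi fun _ : Fin n => unifMeasure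

/-! ### sign helpers -/

def sgn (b : Bool) : ℝ := if b then 1 else -1

lemma sgn_ne_zero (b : Bool) : sgn b ≠ 0 := by cases b <;> norm_num [sgn]
lemma sgn_mul_self (b : Bool) : sgn b * sgn b = 1 := by cases b <;> norm_num [sgn]
lemma sgn_not (b : Bool) : sgn (!b) = - sgn b := by cases b <;> norm_num [sgn]
lemma sgn_mul_sgn (a b : Bool) : sgn a * sgn b = sgn (a == b) := by
  cases a <;> cases b <;> norm_num [sgn]

instance : NullSingletonClass unifMeasure := by
  constructor
  intro x
  rw [unifMeasure, Measure.smul_apply, Measure.restrict_apply (measurableSet_singleton x)]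
  simp [measure_mono_null (Set.inter_subset_left) (measure_singleton x)]

lemma unif_neg : MeasurePreserving (fun x : ℝ => -x) unifMeasure unifMeasure := by
  have h1 : MeasurePreserving (fun x : ℝ => -x) volume volume :=
    Measure.measurePreserving_neg volume
  have h2 : (fun x : ℝ => -x) ⁻¹' (Set.Icc (-1) 1) = Set.Icc (-1) 1 := by
    ext x; simp [neg_le, le_neg, and_comm]
  have h3 : MeasurePreserving (fun x : ℝ => -x)
      (volume.restrict (Set.Icc (-1 : ℝ) 1)) (volume.restrict (Set.Icc (-1 : ℝ) 1)) := by
    have := h1.restrict_preimage (measurableSet_Icc (a := (-1:ℝ)) (b := 1))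
    rwa [h2] at this
  refine ⟨h3.measurable, ?_⟩
  rw [unifMeasure, Measure.map_smul, h3.map_eq]

lemma unif_sgn (b : Bool) : MeasurePreserving (fun x : ℝ => sgn b * x) unifMeasure unifMeasure := by
  cases b
  · have : (fun x : ℝ => sgn false * x) = fun x : ℝ => -x := by
      funext x; simp [sgn]
    rw [this]; exact unif_neg
  · have : (fun x : ℝ => sgn true * x) = id := by funext x; simp [sgn]
    rw [this]; exact MeasurePreserving.id _

/-- The sign-flip map. -/
def mflip (σ τ : Fin n → Bool) (B : Matrix (Fin n) (Fin n) ℝ) : Matrix (Fin n) (Fin n) ℝ :=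
  fun i j => sgn (σ i) * (sgn (τ j) * B i j)

lemma flip_measurePreserving {n : ℕ} (σ τ : Fin n → Bool) :
    MeasurePreserving (mflip σ τ) (matrixMeasure n) (matrixMeasure n) := by
  have h : ∀ i, MeasurePreserving
      (fun (r : Fin n → ℝ) (j : Fin n) => sgn (σ i) * (sgn (τ j) * r j))
      (Measure.pi fun _ : Fin n => unifMeasure) (Measure.pi fun _ : Fin n => unifMeasure) := by
    intro i
    have := measurePreserving_pi (fun _ : Fin n => unifMeasure) (fun _ : Fin n => unifMeasure)
      (f := fun j (x : ℝ) => sgn (σ i == τ j) * x) (fun j => unif_sgn _)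
    convert this using 2 with r
    funext j
    rw [← mul_assoc, sgn_mul_sgn]
  exact measurePreserving_pi (fun _ : Fin n => Measure.pi fun _ : Fin n => unifMeasure)
    (fun _ : Fin n => Measure.pi fun _ : Fin n => unifMeasure)
    (f := fun i (r : Fin n → ℝ) (j : Fin n) => sgn (σ i) * (sgn (τ j) * r j)) h
/-! ### the flipping lemma -/

lemma upd_sum {n : ℕ} (f : Fin n → Bool) (S : Fin n → ℝ) (i0 : Fin n) :
    ∑ i, sgn (Function.update f i0 (!f i0) i) * S i
      = (∑ i, sgn (f i) * S i) - 2 * (sgn (f i0) * S i0) := by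
  have : ∑ i, (sgn (Function.update f i0 (!f i0) i) * S i - sgn (f i) * S i)
      = -(2 * (sgn (f i0) * S i0)) := by
    rw [Finset.sum_eq_single i0]
    · rw [Function.update_self, sgn_not]; ring
    · intro i _ hne; rw [Function.update_of_ne hne]; ring
    · intro h; exact absurd (Finset.mem_univ i0) h
  rw [Finset.sum_sub_distrib] at this
  linarith

lemma flipping {n : ℕ} (A : Matrix (Fin n) (Fin n) ℝ)
    (hr : ∀ (τ : Fin n → Bool) (i), ∑ j, sgn (τ j) * A i j ≠ 0)
    (hc : ∀ (σ : Fin n → Bool) (j), ∑ i, sgn (σ i) * A i j ≠ 0) :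
    ∃ (σ τ : Fin n → Bool), (∀ i, 0 < sgn (σ i) * ∑ j, sgn (τ j) * A i j) ∧
           (∀ j, 0 < sgn (τ j) * ∑ i, sgn (σ i) * A i j) := by
  classical
  set F : ((Fin n → Bool) × (Fin n → Bool)) → ℝ :=
    fun p => ∑ i, ∑ j, sgn (p.1 i) * (sgn (p.2 j) * A i j) with hF
  obtain ⟨⟨σ, τ⟩, hmax⟩ := Finite.exists_max F
  have pos_of : ∀ (x : ℝ) (b : Bool), 0 ≤ sgn b * x → x ≠ 0 → 0 < sgn b * x := by
    intro x b h hx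
    refine lt_of_le_of_ne h fun h0 => hx ?_
    rcases mul_eq_zero.mp h0.symm with h' | h'
    · exact absurd h' (sgn_ne_zero _)
    · exact h'
  refine ⟨σ, τ, ?_, ?_⟩
  · intro i0
    have key : F (Function.update σ i0 (!σ i0), τ) ≤ F (σ, τ) := hmax _
    have expand : ∀ s : Fin n → Bool,
        F (s, τ) = ∑ i, sgn (s i) * ∑ j, sgn (τ j) * A i j := by
      intro s; simp only [hF, Finset.mul_sum]
    rw [expand, expand, upd_sum] at key
    exact pos_of _ _ (by linarith) (hr τ i0)
  · intro j0
    have key : F (σ, Function.update τ j0 (!τ j0)) ≤ F (σ, τ) := hmax _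
    have expand : ∀ t : Fin n → Bool,
        F (σ, t) = ∑ j, sgn (t j) * ∑ i, sgn (σ i) * A i j := by
      intro t
      simp only [hF]
      rw [Finset.sum_comm]
      refine Finset.sum_congr rfl fun j _ => ?_
      rw [Finset.mul_sum]
      exact Finset.sum_congr rfl fun i _ => by ring
    rw [expand, expand, upd_sum] at key
    exact pos_of _ _ (by linarith) (hc σ j0)
/-! ### zero sets of nonzero polynomials are null -/

lemma measurable_mv_eval {ι : Type*} [Fintype ι] (p : MvPolynomial ι ℝ) :
    Measurable fun x : ι → ℝ => MvPolynomial.eval x p := by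
  simp only [MvPolynomial.eval_eq]
  refine Finset.measurable_sum _ fun d _ => Measurable.const_mul ?_ _
  exact Finset.measurable_prod _ fun i _ => (measurable_pi_apply i).pow_const _

lemma poly_null_fin : ∀ (m : ℕ) (p : MvPolynomial (Fin m) ℝ), p ≠ 0 →
    (Measure.pi fun _ : Fin m => unifMeasure) {x | MvPolynomial.eval x p = 0} = 0 := by
  intro m
  induction m with
  | zero =>
    intro p hp
    obtain ⟨a, rfl⟩ := MvPolynomial.C_surjective (Fin 0) p
    have ha : a ≠ 0 := fun h => hp (by rw [h, map_zero])
    have : {x : Fin 0 → ℝ | MvPolynomial.eval x (MvPolynomial.C a) = 0} = ∅ := by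
      ext x; simp [ha]
    rw [this, measure_empty]
  | succ m ih =>
    intro p hp
    classical
    set q : Polynomial (MvPolynomial (Fin m) ℝ) := MvPolynomial.finSuccEquiv ℝ m p with hq
    have hq0 : q ≠ 0 := by
      intro h
      apply hp
      have := congrArg (MvPolynomial.finSuccEquiv ℝ m).symm (hq ▸ h)
      simpa using this
    have hc : q.leadingCoeff ≠ 0 := Polynomial.leadingCoeff_ne_zero.mpr hq0
    set T : Set (ℝ × (Fin m → ℝ)) :=
      {z | MvPolynomial.eval (Fin.cons z.1 z.2) p = 0} with hT
    have hTmeas : MeasurableSet T := by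
      have : Measurable fun z : ℝ × (Fin m → ℝ) => MvPolynomial.eval (Fin.cons z.1 z.2) p := by
        refine (measurable_mv_eval p).comp ?_
        refine measurable_pi_iff.mpr fun i => ?_
        refine Fin.cases ?_ ?_ i
        · simpa using measurable_fst
        · intro j; simp only [Fin.cons_succ]; exact (measurable_pi_apply j).comp measurable_snd
      exact this (measurableSet_singleton 0)
    have hpre : {x : Fin (m+1) → ℝ | MvPolynomial.eval x p = 0}
        = (MeasurableEquiv.piFinSuccAbove (fun _ => ℝ) 0) ⁻¹' T := by
      ext x
      have hx : (Fin.cons (x 0) (Fin.removeNth 0 x) : Fin (m+1) → ℝ) = x := by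
        rw [Fin.removeNth_zero, Fin.cons_self_tail]
      simp only [Set.mem_setOf_eq, Set.mem_preimage, hT]
      rw [show (MeasurableEquiv.piFinSuccAbove (fun _ => ℝ) 0) x
        = (x 0, Fin.removeNth 0 x) from rfl, hx]
    rw [hpre]
    have mp := measurePreserving_piFinSuccAbove (fun _ : Fin (m+1) => unifMeasure) 0
    rw [mp.measure_preimage hTmeas.nullMeasurableSet]
    have hswap : (unifMeasure.prod (Measure.pi fun _ : Fin m => unifMeasure)) T
        = ((Measure.pi fun _ : Fin m => unifMeasure).prod unifMeasure) (Prod.swap ⁻¹' T) := by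
      rw [← Measure.prod_swap, Measure.map_apply measurable_swap hTmeas]
    rw [hswap]
    have hT' : MeasurableSet (Prod.swap ⁻¹' T) := measurable_swap hTmeas
    rw [Measure.measure_prod_null hT']
    have hae : ∀ᵐ y ∂(Measure.pi fun _ : Fin m => unifMeasure),
        MvPolynomial.eval y q.leadingCoeff ≠ 0 := by
      rw [ae_iff]
      have : {y : Fin m → ℝ | ¬ MvPolynomial.eval y q.leadingCoeff ≠ 0}
          = {y | MvPolynomial.eval y q.leadingCoeff = 0} := by
        ext y; simp
      rw [this]
      exact ih q.leadingCoeff hc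
    filter_upwards [hae] with y hy
    have hset : Prod.mk y ⁻¹' (Prod.swap ⁻¹' T)
        = {a : ℝ | Polynomial.IsRoot (q.map (MvPolynomial.eval y)) a} := by
      ext a
      simp only [Set.mem_preimage, Set.mem_setOf_eq, hT, Prod.swap_prod_mk]
      rw [MvPolynomial.eval_eq_eval_mv_eval']
      rfl
    have hqy : q.map (MvPolynomial.eval y) ≠ 0 := by
      intro h
      apply hy
      have h2 := congrArg (fun r => Polynomial.coeff r q.natDegree) h
      simp only [Polynomial.coeff_map, Polynomial.coeff_zero] at h2
      rw [Polynomial.leadingCoeff]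
      exact h2
    simp only [Pi.zero_apply]
    rw [hset]
    exact Set.Finite.measure_zero (Polynomial.finite_setOf_isRoot hqy) _
lemma poly_null_gen {ι : Type*} [Fintype ι] (p : MvPolynomial ι ℝ) (hp : p ≠ 0) :
    (Measure.pi fun _ : ι => unifMeasure) {x | MvPolynomial.eval x p = 0} = 0 := by
  classical
  set f : ι ≃ Fin (Fintype.card ι) := Fintype.equivFin ι with hf
  set p' : MvPolynomial (Fin (Fintype.card ι)) ℝ := MvPolynomial.rename f p with hp'
  have hp'0 : p' ≠ 0 := fun h =>
    hp (MvPolynomial.rename_injective f f.injective (by simpa using h))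
  have mp := measurePreserving_piCongrLeft (μ := fun _ : Fin (Fintype.card ι) => unifMeasure) (α := fun _ => ℝ) f
  have hpre : {x : ι → ℝ | MvPolynomial.eval x p = 0}
      = (MeasurableEquiv.piCongrLeft (fun _ => ℝ) f) ⁻¹' {z | MvPolynomial.eval z p' = 0} := by
    ext x
    simp only [Set.mem_setOf_eq, Set.mem_preimage, hp', MvPolynomial.eval_rename]
    have : ((MeasurableEquiv.piCongrLeft (fun _ => ℝ) f) x) ∘ f = x := by
      funext i
      exact MeasurableEquiv.piCongrLeft_apply_apply (β := fun _ : Fin (Fintype.card ι) => ℝ) f x i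
    rw [this]
  rw [hpre, mp.measure_preimage]
  · exact poly_null_fin _ p' hp'0
  · exact ((measurable_mv_eval p') (measurableSet_singleton 0)).nullMeasurableSet

lemma curry_measurePreserving (n : ℕ) :
    MeasurePreserving (fun (B : Matrix (Fin n) (Fin n) ℝ) (q : Fin n × Fin n) => B q.1 q.2)
      (matrixMeasure n) (Measure.pi fun _ : Fin n × Fin n => unifMeasure) := by
  have hmeas : Measurable (fun (B : Matrix (Fin n) (Fin n) ℝ) (q : Fin n × Fin n) => B q.1 q.2) :=
    measurable_pi_iff.mpr fun q => (measurable_pi_apply q.2).comp (measurable_pi_apply q.1)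
  refine ⟨hmeas, ?_⟩
  refine (Measure.pi_eq fun s hs => ?_).symm
  rw [Measure.map_apply hmeas (MeasurableSet.univ_pi hs)]
  have hpre : (fun (B : Matrix (Fin n) (Fin n) ℝ) (q : Fin n × Fin n) => B q.1 q.2) ⁻¹'
      (Set.univ.pi s) = Set.univ.pi fun i => Set.univ.pi fun j => s (i, j) := by
    ext B
    constructor
    · intro h i _ j _
      exact h (i, j) (Set.mem_univ _)
    · intro h q _
      exact h q.1 (Set.mem_univ _) q.2 (Set.mem_univ _)
  rw [hpre, Fintype.prod_prod_type]
  refine Eq.trans (Measure.pi_pi _ _) ?_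
  exact Finset.prod_congr rfl fun i _ => (Measure.pi_pi _ _)

lemma matrix_poly_null (n : ℕ) (p : MvPolynomial (Fin n × Fin n) ℝ) (hp : p ≠ 0) :
    matrixMeasure n {B | MvPolynomial.eval (fun q => B q.1 q.2) p = 0} = 0 := by
  have h : {B : Matrix (Fin n) (Fin n) ℝ | MvPolynomial.eval (fun q => B q.1 q.2) p = 0}
      = (fun (B : Matrix (Fin n) (Fin n) ℝ) (q : Fin n × Fin n) => B q.1 q.2) ⁻¹'
        {x | MvPolynomial.eval x p = 0} := rfl
  have hms : MeasurableSet {x : (Fin n × Fin n) → ℝ | MvPolynomial.eval x p = 0} :=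
    measurable_mv_eval p (measurableSet_singleton 0)
  rw [h, (curry_measurePreserving n).measure_preimage hms.nullMeasurableSet]
  exact poly_null_gen p hp
/-! ### specific polynomials and measurability -/

lemma measurable_det_comp {α : Type*} [MeasurableSpace α] {n : ℕ}
    (f : α → Matrix (Fin n) (Fin n) ℝ) (hf : ∀ i j, Measurable fun a => f a i j) :
    Measurable fun a => (f a).det := by
  simp only [Matrix.det_apply']
  exact Finset.measurable_sum _ fun σ _ =>
    Measurable.const_mul (Finset.measurable_prod _ fun i _ => hf _ _) _

lemma measurable_entry {n : ℕ} (i j : Fin n) :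
    Measurable fun B : Matrix (Fin n) (Fin n) ℝ => B i j :=
  (measurable_pi_apply j).comp (measurable_pi_apply i)

lemma measurable_detB {n : ℕ} : Measurable fun B : Matrix (Fin n) (Fin n) ℝ => B.det :=
  measurable_det_comp (fun B => B) measurable_entry

lemma measurable_adj {n : ℕ} (i j : Fin n) :
    Measurable fun B : Matrix (Fin n) (Fin n) ℝ => B.adjugate i j := by
  simp only [Matrix.adjugate_apply]
  refine measurable_det_comp _ fun i' j' => ?_
  by_cases h : i' = j
  · simp only [Matrix.updateRow_apply, h, if_true]
    exact measurable_const
  · simp only [Matrix.updateRow_apply, h, if_false]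
    exact measurable_entry _ _

lemma measurable_inv_entry {n : ℕ} (i j : Fin n) :
    Measurable fun B : Matrix (Fin n) (Fin n) ℝ => B⁻¹ i j := by
  have : (fun B : Matrix (Fin n) (Fin n) ℝ => B⁻¹ i j)
      = fun B => (B.det)⁻¹ * B.adjugate i j := by
    funext B
    rw [Matrix.inv_def, Matrix.smul_apply, Ring.inverse_eq_inv', smul_eq_mul]
  rw [this]
  exact (measurable_detB.inv).mul (measurable_adj i j)

lemma event_measurable (n : ℕ) :
    MeasurableSet {B : Matrix (Fin n) (Fin n) ℝ |
      IsUnit B.det ∧ (∀ i, 0 < ∑ j, B⁻¹ i j) ∧ (∀ j, 0 < ∑ i, B⁻¹ i j)} := by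
  have h1 : MeasurableSet {B : Matrix (Fin n) (Fin n) ℝ | IsUnit B.det} := by
    have : {B : Matrix (Fin n) (Fin n) ℝ | IsUnit B.det}
        = {B : Matrix (Fin n) (Fin n) ℝ | B.det = 0}ᶜ := by
      ext B; simp [isUnit_iff_ne_zero]
    rw [this]
    exact (measurable_detB (measurableSet_singleton 0)).compl
  have h2 : MeasurableSet {B : Matrix (Fin n) (Fin n) ℝ | ∀ i, 0 < ∑ j, B⁻¹ i j} := by
    have : {B : Matrix (Fin n) (Fin n) ℝ | ∀ i, 0 < ∑ j, B⁻¹ i j}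
        = ⋂ i, {B : Matrix (Fin n) (Fin n) ℝ | 0 < ∑ j, B⁻¹ i j} := by
      ext B; simp
    rw [this]
    exact MeasurableSet.iInter fun i =>
      measurableSet_lt measurable_const (Finset.measurable_sum _ fun j _ => measurable_inv_entry i j)
  have h3 : MeasurableSet {B : Matrix (Fin n) (Fin n) ℝ | ∀ j, 0 < ∑ i, B⁻¹ i j} := by
    have : {B : Matrix (Fin n) (Fin n) ℝ | ∀ j, 0 < ∑ i, B⁻¹ i j}
        = ⋂ j, {B : Matrix (Fin n) (Fin n) ℝ | 0 < ∑ i, B⁻¹ i j} := by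
      ext B; simp
    rw [this]
    exact MeasurableSet.iInter fun j =>
      measurableSet_lt measurable_const (Finset.measurable_sum _ fun i _ => measurable_inv_entry i j)
  exact h1.inter (h2.inter h3)

noncomputable def detPoly (n : ℕ) : MvPolynomial (Fin n × Fin n) ℝ :=
  Matrix.det (Matrix.mvPolynomialX (Fin n) (Fin n) ℝ)

lemma eval_detPoly {n : ℕ} (B : Matrix (Fin n) (Fin n) ℝ) :
    MvPolynomial.eval (fun q => B q.1 q.2) (detPoly n) = B.det := by
  rw [detPoly, (MvPolynomial.eval fun q : Fin n × Fin n => B q.1 q.2).map_det]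
  congr 1
  exact Matrix.mvPolynomialX_mapMatrix_eval B

noncomputable def adjP (n : ℕ) (i j : Fin n) : MvPolynomial (Fin n × Fin n) ℝ :=
  Matrix.det ((Matrix.mvPolynomialX (Fin n) (Fin n) ℝ).updateRow j
    (fun k => MvPolynomial.C ((Pi.single i (1:ℝ) : Fin n → ℝ) k)))

lemma eval_adjP {n : ℕ} (i j : Fin n) (B : Matrix (Fin n) (Fin n) ℝ) :
    MvPolynomial.eval (fun q => B q.1 q.2) (adjP n i j) = B.adjugate i j := by
  rw [adjP, (MvPolynomial.eval fun q : Fin n × Fin n => B q.1 q.2).map_det,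
    Matrix.adjugate_apply]
  congr 1
  rw [RingHom.mapMatrix_apply, Matrix.map_updateRow]
  have hX : (Matrix.mvPolynomialX (Fin n) (Fin n) ℝ).map
      ⇑(MvPolynomial.eval fun q : Fin n × Fin n => B q.1 q.2) = B := by
    have := Matrix.mvPolynomialX_mapMatrix_eval (R := ℝ) B
    rwa [RingHom.mapMatrix_apply] at this
  rw [hX]
  have hv : (⇑(MvPolynomial.eval fun q : Fin n × Fin n => B q.1 q.2)
      ∘ fun k => MvPolynomial.C ((Pi.single i (1:ℝ) : Fin n → ℝ) k)) = Pi.single i 1 := by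
    funext k
    simp [Function.comp_apply]
  rw [hv]
/-! ### the good set has full measure -/

noncomputable def rowPoly (n : ℕ) (c : Fin n → ℝ) (i : Fin n) : MvPolynomial (Fin n × Fin n) ℝ :=
  ∑ j, MvPolynomial.C (c j) * adjP n i j

noncomputable def colPoly (n : ℕ) (c : Fin n → ℝ) (j : Fin n) : MvPolynomial (Fin n × Fin n) ℝ :=
  ∑ i, MvPolynomial.C (c i) * adjP n i j

lemma eval_rowPoly {n : ℕ} (c : Fin n → ℝ) (i : Fin n) (B : Matrix (Fin n) (Fin n) ℝ) :
    MvPolynomial.eval (fun q => B q.1 q.2) (rowPoly n c i) = ∑ j, c j * B.adjugate i j := by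
  rw [rowPoly, map_sum]
  exact Finset.sum_congr rfl fun j _ => by rw [_root_.map_mul, MvPolynomial.eval_C, eval_adjP]

lemma eval_colPoly {n : ℕ} (c : Fin n → ℝ) (j : Fin n) (B : Matrix (Fin n) (Fin n) ℝ) :
    MvPolynomial.eval (fun q => B q.1 q.2) (colPoly n c j) = ∑ i, c i * B.adjugate i j := by
  rw [colPoly, map_sum]
  exact Finset.sum_congr rfl fun i _ => by rw [_root_.map_mul, MvPolynomial.eval_C, eval_adjP]

lemma ne_zero_of_eval_ne {n : ℕ} (p : MvPolynomial (Fin n × Fin n) ℝ)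
    (B : Matrix (Fin n) (Fin n) ℝ) (h : MvPolynomial.eval (fun q => B q.1 q.2) p ≠ 0) :
    p ≠ 0 := fun h0 => h (by rw [h0, map_zero])

lemma rowPoly_ne_zero {n : ℕ} (τ : Fin n → Bool) (i : Fin n) :
    rowPoly n (fun j => sgn (τ j)) i ≠ 0 := by
  refine ne_zero_of_eval_ne _ (1 : Matrix (Fin n) (Fin n) ℝ) ?_
  rw [eval_rowPoly]
  have : ∑ j, sgn (τ j) * (1 : Matrix (Fin n) (Fin n) ℝ).adjugate i j = sgn (τ i) := by
    rw [Matrix.adjugate_one]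
    rw [Finset.sum_eq_single i]
    · simp [Matrix.one_apply]
    · intro j _ hj; simp [Matrix.one_apply, hj.symm]
    · intro h; exact absurd (Finset.mem_univ i) h
  rw [this]
  exact sgn_ne_zero _

lemma colPoly_ne_zero {n : ℕ} (σ : Fin n → Bool) (j : Fin n) :
    colPoly n (fun i => sgn (σ i)) j ≠ 0 := by
  refine ne_zero_of_eval_ne _ (1 : Matrix (Fin n) (Fin n) ℝ) ?_
  rw [eval_colPoly]
  have : ∑ i, sgn (σ i) * (1 : Matrix (Fin n) (Fin n) ℝ).adjugate i j = sgn (σ j) := by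
    rw [Matrix.adjugate_one]
    rw [Finset.sum_eq_single j]
    · simp [Matrix.one_apply]
    · intro i _ hi; simp [Matrix.one_apply, hi]
    · intro h; exact absurd (Finset.mem_univ j) h
  rw [this]
  exact sgn_ne_zero _

def good (n : ℕ) : Set (Matrix (Fin n) (Fin n) ℝ) :=
  {B | B.det ≠ 0 ∧ (∀ (τ : Fin n → Bool) (i), ∑ j, sgn (τ j) * B⁻¹ i j ≠ 0)
     ∧ (∀ (σ : Fin n → Bool) (j), ∑ i, sgn (σ i) * B⁻¹ i j ≠ 0)}

lemma inv_entry_eq {n : ℕ} (B : Matrix (Fin n) (Fin n) ℝ) (i j : Fin n) :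
    B⁻¹ i j = (B.det)⁻¹ * B.adjugate i j := by
  rw [Matrix.inv_def, Matrix.smul_apply, Ring.inverse_eq_inv', smul_eq_mul]

lemma good_null (n : ℕ) : matrixMeasure n (good n)ᶜ = 0 := by
  classical
  set N : Set (Matrix (Fin n) (Fin n) ℝ) :=
    {B | MvPolynomial.eval (fun q => B q.1 q.2) (detPoly n) = 0}
    ∪ (⋃ (τ : Fin n → Bool) (i : Fin n),
        {B | MvPolynomial.eval (fun q => B q.1 q.2) (rowPoly n (fun j => sgn (τ j)) i) = 0})
    ∪ (⋃ (σ : Fin n → Bool) (j : Fin n),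
        {B | MvPolynomial.eval (fun q => B q.1 q.2) (colPoly n (fun i => sgn (σ i)) j) = 0}) with hN
  have hsub : (good n)ᶜ ⊆ N := by
    intro B hB
    rw [Set.mem_compl_iff, good, Set.mem_setOf_eq] at hB
    push_neg at hB
    by_cases hdet : B.det = 0
    · exact Set.mem_union_left _ (Set.mem_union_left _ (by
        simpa [Set.mem_setOf_eq, eval_detPoly] using hdet))
    · by_cases hQ : ∀ (τ : Fin n → Bool) (i), ∑ j, sgn (τ j) * B⁻¹ i j ≠ 0
      case neg =>
        push_neg at hQ
        obtain ⟨τ, i, hi⟩ := hQ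
        refine Set.mem_union_left _ (Set.mem_union_right _ ?_)
        refine Set.mem_iUnion.mpr ⟨τ, Set.mem_iUnion.mpr ⟨i, ?_⟩⟩
        rw [Set.mem_setOf_eq, eval_rowPoly]
        have : ∑ j, sgn (τ j) * B⁻¹ i j = (B.det)⁻¹ * ∑ j, sgn (τ j) * B.adjugate i j := by
          rw [Finset.mul_sum]
          exact Finset.sum_congr rfl fun j _ => by rw [inv_entry_eq]; ring
        rw [this] at hi
        rcases mul_eq_zero.mp hi with h | h
        · exact absurd h (inv_ne_zero hdet)
        · exact h
      case pos =>
        obtain ⟨σ, j, hj⟩ := hB hdet hQ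
        refine Set.mem_union_right _ ?_
        refine Set.mem_iUnion.mpr ⟨σ, Set.mem_iUnion.mpr ⟨j, ?_⟩⟩
        rw [Set.mem_setOf_eq, eval_colPoly]
        have : ∑ i, sgn (σ i) * B⁻¹ i j = (B.det)⁻¹ * ∑ i, sgn (σ i) * B.adjugate i j := by
          rw [Finset.mul_sum]
          exact Finset.sum_congr rfl fun i _ => by rw [inv_entry_eq]; ring
        rw [this] at hj
        rcases mul_eq_zero.mp hj with h | h
        · exact absurd h (inv_ne_zero hdet)
        · exact h
  refine measure_mono_null hsub ?_
  rw [hN]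
  refine measure_union_null (measure_union_null ?_ ?_) ?_
  · exact matrix_poly_null n _ (by
      refine ne_zero_of_eval_ne _ (1 : Matrix (Fin n) (Fin n) ℝ) ?_
      rw [eval_detPoly, Matrix.det_one]; norm_num)
  · refine measure_iUnion_null fun τ => measure_iUnion_null fun i => ?_
    exact matrix_poly_null n _ (rowPoly_ne_zero τ i)
  · refine measure_iUnion_null fun σ => measure_iUnion_null fun j => ?_
    exact matrix_poly_null n _ (colPoly_ne_zero σ j)
/-! ### membership of flipped matrices in the event -/

lemma flip_mem_event {n : ℕ} (B : Matrix (Fin n) (Fin n) ℝ) (hdet : B.det ≠ 0)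
    (a b : Fin n → Bool)
    (h1 : ∀ i, 0 < sgn (a i) * ∑ j, sgn (b j) * B⁻¹ i j)
    (h2 : ∀ j, 0 < sgn (b j) * ∑ i, sgn (a i) * B⁻¹ i j) :
    mflip b a B ∈ {C : Matrix (Fin n) (Fin n) ℝ |
      IsUnit C.det ∧ (∀ i, 0 < ∑ j, C⁻¹ i j) ∧ (∀ j, 0 < ∑ i, C⁻¹ i j)} := by
  classical
  set Da : Matrix (Fin n) (Fin n) ℝ := Matrix.diagonal (fun i => sgn (a i)) with hDa
  set Db : Matrix (Fin n) (Fin n) ℝ := Matrix.diagonal (fun i => sgn (b i)) with hDb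
  have hDa2 : Da * Da = 1 := by
    rw [hDa, Matrix.diagonal_mul_diagonal]
    rw [show (fun i => sgn (a i) * sgn (a i)) = fun _ => (1:ℝ) from funext fun i => sgn_mul_self _]
    exact Matrix.diagonal_one
  have hDb2 : Db * Db = 1 := by
    rw [hDb, Matrix.diagonal_mul_diagonal]
    rw [show (fun i => sgn (b i) * sgn (b i)) = fun _ => (1:ℝ) from funext fun i => sgn_mul_self _]
    exact Matrix.diagonal_one
  have hBf : mflip b a B = Db * B * Da := by
    ext i j
    rw [Matrix.mul_diagonal, Matrix.diagonal_mul]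
    show sgn (b i) * (sgn (a j) * B i j) = _
    ring
  have hBB : B * B⁻¹ = 1 := Matrix.mul_nonsing_inv B (isUnit_iff_ne_zero.mpr hdet)
  set M : Matrix (Fin n) (Fin n) ℝ := Da * B⁻¹ * Db with hM
  have hright : (mflip b a B) * M = 1 := by
    rw [hBf, hM]
    calc Db * B * Da * (Da * B⁻¹ * Db) = Db * B * (Da * Da) * B⁻¹ * Db := by
          simp only [Matrix.mul_assoc]
      _ = Db * (B * B⁻¹) * Db := by rw [hDa2]; simp only [Matrix.mul_assoc, Matrix.one_mul]
      _ = Db * Db := by rw [hBB, Matrix.mul_one]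
      _ = 1 := hDb2
  have hunit : IsUnit (mflip b a B).det := Matrix.isUnit_det_of_right_inverse hright
  have hinv : (mflip b a B)⁻¹ = M := Matrix.inv_eq_right_inv hright
  have hMij : ∀ i j, M i j = sgn (a i) * B⁻¹ i j * sgn (b j) := by
    intro i j
    rw [hM, Matrix.mul_diagonal, Matrix.diagonal_mul]
  refine ⟨hunit, ?_, ?_⟩
  · intro i
    rw [hinv]
    have : ∑ j, M i j = sgn (a i) * ∑ j, sgn (b j) * B⁻¹ i j := by
      rw [Finset.mul_sum]
      exact Finset.sum_congr rfl fun j _ => by rw [hMij]; ring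
    rw [this]
    exact h1 i
  · intro j
    rw [hinv]
    have : ∑ i, M i j = sgn (b j) * ∑ i, sgn (a i) * B⁻¹ i j := by
      rw [Finset.mul_sum]
      exact Finset.sum_congr rfl fun i _ => by rw [hMij]; ring
    rw [this]
    exact h2 j
/-! ### main theorem -/

lemma cover_lemma {m : ℕ} (B : Matrix (Fin (m+1)) (Fin (m+1)) ℝ) (hB : B ∈ good (m+1)) :
    ∃ (a : Fin (m+1) → Bool) (b : Fin (m+1) → Bool), a 0 = true ∧
      (∀ i, 0 < sgn (a i) * ∑ j, sgn (b j) * B⁻¹ i j) ∧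
      (∀ j, 0 < sgn (b j) * ∑ i, sgn (a i) * B⁻¹ i j) := by
  obtain ⟨hdet, hr, hc⟩ := hB
  obtain ⟨a, b, h1, h2⟩ := flipping B⁻¹ hr hc
  by_cases h0 : a 0
  · exact ⟨a, b, h0, h1, h2⟩
  · refine ⟨fun i => !(a i), fun j => !(b j), by simp only [Bool.not_eq_true] at h0; simp [h0], ?_, ?_⟩
    · intro i
      have hsum : ∑ j, sgn (!(b j)) * B⁻¹ i j = -∑ j, sgn (b j) * B⁻¹ i j := by
        rw [← Finset.sum_neg_distrib]
        exact Finset.sum_congr rfl fun j _ => by rw [sgn_not, neg_mul]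
      have : sgn (!(a i)) * ∑ j, sgn (!(b j)) * B⁻¹ i j
          = sgn (a i) * ∑ j, sgn (b j) * B⁻¹ i j := by
        rw [hsum, sgn_not]; ring
      rw [this]; exact h1 i
    · intro j
      have hsum : ∑ i, sgn (!(a i)) * B⁻¹ i j = -∑ i, sgn (a i) * B⁻¹ i j := by
        rw [← Finset.sum_neg_distrib]
        exact Finset.sum_congr rfl fun i _ => by rw [sgn_not, neg_mul]
      have : sgn (!(b j)) * ∑ i, sgn (!(a i)) * B⁻¹ i j
          = sgn (b j) * ∑ i, sgn (a i) * B⁻¹ i j := by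
        rw [hsum, sgn_not]; ring
      rw [this]; exact h2 j

theorem prob_inv_pos_sums_ge (n : ℕ) :
    (2 : ENNReal)⁻¹ ^ (2 * n - 1) ≤
      matrixMeasure n
        {B | IsUnit B.det ∧ (∀ i, 0 < ∑ j, B⁻¹ i j) ∧ (∀ j, 0 < ∑ i, B⁻¹ i j)} := by
  cases n with
  | zero =>
    have huniv : {B : Matrix (Fin 0) (Fin 0) ℝ |
        IsUnit B.det ∧ (∀ i, 0 < ∑ j, B⁻¹ i j) ∧ (∀ j, 0 < ∑ i, B⁻¹ i j)} = Set.univ := by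
      ext B
      simp only [Set.mem_setOf_eq, Set.mem_univ, iff_true]
      exact ⟨by rw [Matrix.det_isEmpty]; exact isUnit_one, fun i => i.elim0, fun j => j.elim0⟩
    rw [huniv]
    have h1 : matrixMeasure 0 Set.univ = 1 := by
      have hprob : (Measure.pi fun _ : Fin 0 => Measure.pi fun _ : Fin 0 => unifMeasure)
          (Set.univ : Set (Fin 0 → Fin 0 → ℝ)) = 1 := measure_univ
      exact hprob
    rw [h1]
    norm_num
  | succ m =>
    classical
    set E := {B : Matrix (Fin (m+1)) (Fin (m+1)) ℝ |
      IsUnit B.det ∧ (∀ i, 0 < ∑ j, B⁻¹ i j) ∧ (∀ j, 0 < ∑ i, B⁻¹ i j)} with hE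
    have hEm : MeasurableSet E := event_measurable (m+1)
    set W := ⋃ p : ((Fin m → Bool) × (Fin (m+1) → Bool)), (mflip p.2 (Fin.cons true p.1)) ⁻¹' E with hW
    have hcover : good (m+1) ⊆ W := by
      intro B hB
      obtain ⟨a, b, h0, h1, h2⟩ := cover_lemma B hB
      rw [hW]
      refine Set.mem_iUnion.mpr ⟨(fun i => a i.succ, b), ?_⟩
      have ha : (Fin.cons true (fun i => a i.succ) : Fin (m+1) → Bool) = a := by
        refine funext fun i => Fin.cases ?_ ?_ i
        · rw [Fin.cons_zero, h0]
        · intro j; rw [Fin.cons_succ]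
      show B ∈ (mflip b (Fin.cons true fun i => a i.succ)) ⁻¹' E
      rw [Set.mem_preimage, ha]
      exact flip_mem_event B (by exact hB.1) a b h1 h2
    have hprob : (Measure.pi fun _ : Fin (m+1) => Measure.pi fun _ : Fin (m+1) => unifMeasure)
        (Set.univ : Set (Fin (m+1) → Fin (m+1) → ℝ)) = 1 := measure_univ
    haveI : IsProbabilityMeasure (matrixMeasure (m+1)) := ⟨hprob⟩
    have huniv : (Set.univ : Set (Matrix (Fin (m+1)) (Fin (m+1)) ℝ)) ⊆ W ∪ (good (m+1))ᶜ :=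
      fun B _ => (em (B ∈ good (m+1))).elim (fun h => Or.inl (hcover h)) Or.inr
    have key : (1:ENNReal) ≤ ∑ p : ((Fin m → Bool) × (Fin (m+1) → Bool)), matrixMeasure (m+1) ((mflip p.2 (Fin.cons true p.1)) ⁻¹' E) := by
      calc (1:ENNReal) = matrixMeasure (m+1) Set.univ := measure_univ.symm
        _ ≤ matrixMeasure (m+1) (W ∪ (good (m+1))ᶜ) := measure_mono huniv
        _ ≤ matrixMeasure (m+1) W + matrixMeasure (m+1) (good (m+1))ᶜ := measure_union_le _ _
        _ = matrixMeasure (m+1) W := by rw [good_null, add_zero]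
        _ ≤ ∑' p : ((Fin m → Bool) × (Fin (m+1) → Bool)), matrixMeasure (m+1) ((mflip p.2 (Fin.cons true p.1)) ⁻¹' E) := by
              rw [hW]; exact measure_iUnion_le _
        _ = ∑ p : ((Fin m → Bool) × (Fin (m+1) → Bool)), matrixMeasure (m+1) ((mflip p.2 (Fin.cons true p.1)) ⁻¹' E) := tsum_fintype _
    have hsum : ∑ p : ((Fin m → Bool) × (Fin (m+1) → Bool)), matrixMeasure (m+1) ((mflip p.2 (Fin.cons true p.1)) ⁻¹' E)
        = (Fintype.card ((Fin m → Bool) × (Fin (m+1) → Bool)) : ENNReal) * matrixMeasure (m+1) E := by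
      rw [Finset.sum_congr rfl fun p _ =>
        (flip_measurePreserving p.2 (Fin.cons true p.1)).measure_preimage hEm.nullMeasurableSet]
      rw [Finset.sum_const, Finset.card_univ, nsmul_eq_mul]
    have hcard : (Fintype.card ((Fin m → Bool) × (Fin (m+1) → Bool)) : ENNReal) = (2:ENNReal) ^ (2*m+1) := by
      have : Fintype.card ((Fin m → Bool) × (Fin (m+1) → Bool)) = 2 ^ (2*m+1) := by
        rw [Fintype.card_prod, Fintype.card_fun, Fintype.card_fun, Fintype.card_bool,
          Fintype.card_fin, Fintype.card_fin, ← pow_add]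
        congr 1
        omega
      rw [this]
      push_cast
      rfl
    rw [hsum, hcard] at key
    have hpow : 2 * (m+1) - 1 = 2*m+1 := by omega
    rw [hpow, ← ENNReal.inv_pow]
    have h2 := mul_le_mul_right key (((2:ENNReal) ^ (2*m+1))⁻¹)
    rwa [mul_one, ← mul_assoc, ENNReal.inv_mul_cancel
      (pow_ne_zero _ (by norm_num)) (ENNReal.pow_ne_top (by norm_num)), one_mul] at h2
end

section
/- Under the update p'_{ij} = x_i y_j w_{ij}/w̄ on the Wright manifold with product initial condition, the new genotype distribution is again a rank-one (product) distribution if and only if the matrix (w_{ij}) restricted to the supports of x and y has rank one. -/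
open Finset Matrix

lemma rank_eq_one_iff_factor {ι κ : Type*} [Fintype ι] [Fintype κ] [DecidableEq κ]
    (A : Matrix ι κ ℝ) :
    A.rank = 1 ↔ ∃ (u : ι → ℝ) (v : κ → ℝ),
      (∃ i, u i ≠ 0) ∧ (∃ j, v j ≠ 0) ∧ ∀ i j, A i j = u i * v j := by
  constructor
  · intro h
    have h' := h
    rw [Matrix.rank] at h'
    obtain ⟨⟨u, hu_mem⟩, hu0, hspan⟩ := finrank_eq_one_iff'.mp h'
    choose c hc using fun j : κ =>
      hspan ⟨A.mulVec (Pi.single j 1), ⟨Pi.single j 1, by simp [Matrix.mulVecLin_apply]⟩⟩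
    have key : ∀ i j, A i j = u i * c j := by
      intro i j
      have := congrArg (fun z : (LinearMap.range A.mulVecLin) => (z : ι → ℝ) i) (hc j)
      simp only [Submodule.coe_smul, Pi.smul_apply, smul_eq_mul] at this
      rw [Matrix.mulVec_single] at this
      simpa [mul_comm] using this.symm
    have huu : u ≠ 0 := by
      intro hz
      apply hu0
      ext
      simp [hz]
    obtain ⟨i0, hi0⟩ := Function.ne_iff.mp huu
    refine ⟨u, c, ⟨i0, hi0⟩, ?_, key⟩
    by_contra hv
    push_neg at hv
    have hA : A = 0 := by
      ext i j
      simp [key, hv j]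
    rw [hA] at h
    simp [Matrix.rank_zero] at h
  · rintro ⟨u, v, ⟨i0, hi0⟩, ⟨j0, hj0⟩, hA⟩
    have huu : u ≠ 0 := fun h => hi0 (by simp [h])
    have hrange : LinearMap.range A.mulVecLin = Submodule.span ℝ {u} := by
      apply le_antisymm
      · rintro _ ⟨z, rfl⟩
        have : A.mulVecLin z = (∑ j, v j * z j) • u := by
          ext i
          simp only [Matrix.mulVecLin_apply, Matrix.mulVec, dotProduct, Pi.smul_apply,
            smul_eq_mul, Finset.sum_mul, Finset.mul_sum]
          apply Finset.sum_congr rfl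
          intro j _
          rw [hA]; ring
        rw [this]
        exact Submodule.smul_mem _ _ (Submodule.mem_span_singleton_self u)
      · rw [Submodule.span_singleton_le_iff_mem]
        refine ⟨Pi.single j0 (v j0)⁻¹, ?_⟩
        ext i
        rw [Matrix.mulVecLin_apply, Matrix.mulVec_single]
        show A i j0 * (v j0)⁻¹ = u i
        rw [hA]
        field_simp
    rw [Matrix.rank, hrange]
    exact finrank_span_singleton huu

theorem product_form_iff_rank_one (m n : ℕ)
    (x : Fin m → ℝ) (hx : ∀ i, 0 ≤ x i) (hx1 : ∑ i, x i = 1)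
    (y : Fin n → ℝ) (hy : ∀ j, 0 ≤ y j) (hy1 : ∑ j, y j = 1)
    (w : Matrix (Fin m) (Fin n) ℝ) (hw : ∀ i j, 0 < w i j)
    (wbar : ℝ) (hwbar : wbar = ∑ i, ∑ j, x i * y j * w i j) :
    (∃ (x' : Fin m → ℝ) (y' : Fin n → ℝ),
        (∀ i, 0 ≤ x' i) ∧ (∑ i, x' i) = 1 ∧ (∀ j, 0 ≤ y' j) ∧ (∑ j, y' j) = 1 ∧
        ∀ i j, x i * y j * w i j / wbar = x' i * y' j) ↔
      (w.submatrix (fun i : {i : Fin m // 0 < x i} => (i : Fin m))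
        (fun j : {j : Fin n // 0 < y j} => (j : Fin n))).rank = 1 := by
  -- supports are nonempty
  have hxex : ∃ i, 0 < x i := by
    by_contra h
    push_neg at h
    have : ∑ i, x i = 0 := Finset.sum_eq_zero fun i _ => le_antisymm (h i) (hx i)
    rw [hx1] at this; norm_num at this
  have hyex : ∃ j, 0 < y j := by
    by_contra h
    push_neg at h
    have : ∑ j, y j = 0 := Finset.sum_eq_zero fun j _ => le_antisymm (h j) (hy j)
    rw [hy1] at this; norm_num at this
  obtain ⟨i0, hi0⟩ := hxex
  obtain ⟨j0, hj0⟩ := hyex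
  have hwbarpos : 0 < wbar := by
    rw [hwbar]
    have hterm : ∀ i ∈ Finset.univ, (0:ℝ) ≤ ∑ j, x i * y j * w i j := by
      intro i _
      exact Finset.sum_nonneg fun j _ =>
        mul_nonneg (mul_nonneg (hx i) (hy j)) (hw i j).le
    have h1 : 0 < ∑ j, x i0 * y j * w i0 j := by
      have : ∀ j ∈ Finset.univ, (0:ℝ) ≤ x i0 * y j * w i0 j := fun j _ =>
        mul_nonneg (mul_nonneg hi0.le (hy j)) (hw i0 j).le
      refine Finset.sum_pos' this ⟨j0, Finset.mem_univ _, ?_⟩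
      exact mul_pos (mul_pos hi0 hj0) (hw i0 j0)
    exact Finset.sum_pos' hterm ⟨i0, Finset.mem_univ _, h1⟩
  rw [rank_eq_one_iff_factor]
  constructor
  · rintro ⟨x', y', hx'0, hx'1, hy'0, hy'1, hfac⟩
    refine ⟨fun i => x' i / x i, fun j => wbar * y' j / y j, ?_, ?_, ?_⟩
    · refine ⟨⟨i0, hi0⟩, ?_⟩
      have h := hfac i0 j0
      have : 0 < x' i0 * y' j0 := by
        rw [← h]
        exact div_pos (mul_pos (mul_pos hi0 hj0) (hw i0 j0)) hwbarpos
      have hx'pos : x' i0 ≠ 0 := by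
        intro hz; rw [hz, zero_mul] at this; exact lt_irrefl 0 this
      exact div_ne_zero hx'pos hi0.ne'
    · refine ⟨⟨j0, hj0⟩, ?_⟩
      have h := hfac i0 j0
      have : 0 < x' i0 * y' j0 := by
        rw [← h]
        exact div_pos (mul_pos (mul_pos hi0 hj0) (hw i0 j0)) hwbarpos
      have hy'pos : y' j0 ≠ 0 := by
        intro hz; rw [hz, mul_zero] at this; exact lt_irrefl 0 this
      exact div_ne_zero (mul_ne_zero hwbarpos.ne' hy'pos) hj0.ne'
    · rintro ⟨i, hi⟩ ⟨j, hj⟩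
      simp only [Matrix.submatrix_apply]
      have h := hfac i j
      have : x i * y j * w i j = x' i * y' j * wbar := by
        field_simp at h
        linarith [h]
      field_simp
      nlinarith [this]
  · rintro ⟨u, v, ⟨⟨i1, hi1⟩, hu1⟩, ⟨⟨j1, hj1⟩, hv1⟩, hfac⟩
    -- |u| and |v| give a positive factorization on supports
    classical
    set a : Fin m → ℝ := fun i => if h : 0 < x i then |u ⟨i, h⟩| else 0 with ha
    set b : Fin n → ℝ := fun j => if h : 0 < y j then |v ⟨j, h⟩| else 0 with hb
    have hab : ∀ i j, x i * y j * w i j = (x i * a i) * (y j * b j) := by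
      intro i j
      by_cases hxi : 0 < x i
      · by_cases hyj : 0 < y j
        · have h := hfac ⟨i, hxi⟩ ⟨j, hyj⟩
          simp only [Matrix.submatrix_apply] at h
          have hwabs : w i j = a i * b j := by
            rw [ha, hb]
            simp only [hxi, hyj, dif_pos]
            rw [← abs_mul, ← h]
            exact (abs_of_pos (hw i j)).symm
          rw [hwabs]; ring
        · have : y j = 0 := le_antisymm (not_lt.mp hyj) (hy j)
          rw [this]; ring
      · have : x i = 0 := le_antisymm (not_lt.mp hxi) (hx i)
        rw [this]; ring
    have hapos : ∀ i (h : 0 < x i), 0 < a i := by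
      intro i h
      have hu : u ⟨i, h⟩ ≠ 0 := by
        intro hz
        have hf := hfac ⟨i, h⟩ ⟨j1, hj1⟩
        simp only [Matrix.submatrix_apply] at hf
        rw [hz, zero_mul] at hf
        exact (hw i j1).ne' hf
      rw [ha]
      simp only [h, dif_pos]
      exact abs_pos.mpr hu
    have hbpos : ∀ j (h : 0 < y j), 0 < b j := by
      intro j h
      have hv : v ⟨j, h⟩ ≠ 0 := by
        intro hz
        have hf := hfac ⟨i1, hi1⟩ ⟨j, h⟩
        simp only [Matrix.submatrix_apply] at hf
        rw [hz, mul_zero] at hf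
        exact (hw i1 j).ne' hf
      rw [hb]
      simp only [h, dif_pos]
      exact abs_pos.mpr hv
    set A := ∑ i, x i * a i with hA
    set B := ∑ j, y j * b j with hB
    have hApos : 0 < A := by
      refine Finset.sum_pos' (fun i _ => ?_) ⟨i0, Finset.mem_univ _, ?_⟩
      · by_cases h : 0 < x i
        · exact mul_nonneg (hx i) (hapos i h).le
        · have : x i = 0 := le_antisymm (not_lt.mp h) (hx i)
          rw [this]; simp
      · exact mul_pos hi0 (hapos i0 hi0)
    have hBpos : 0 < B := by
      refine Finset.sum_pos' (fun j _ => ?_) ⟨j0, Finset.mem_univ _, ?_⟩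
      · by_cases h : 0 < y j
        · exact mul_nonneg (hy j) (hbpos j h).le
        · have : y j = 0 := le_antisymm (not_lt.mp h) (hy j)
          rw [this]; simp
      · exact mul_pos hj0 (hbpos j0 hj0)
    have hwb : wbar = A * B := by
      rw [hwbar, hA, hB, Finset.sum_mul_sum]
      apply Finset.sum_congr rfl
      intro i _
      apply Finset.sum_congr rfl
      intro j _
      exact hab i j
    refine ⟨fun i => x i * a i / A, fun j => y j * b j / B, ?_, ?_, ?_, ?_, ?_⟩
    · intro i
      apply div_nonneg _ hApos.le
      by_cases h : 0 < x i
      · exact mul_nonneg (hx i) (hapos i h).le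
      · have : x i = 0 := le_antisymm (not_lt.mp h) (hx i)
        rw [this]; simp
    · rw [← Finset.sum_div, ← hA, div_self hApos.ne']
    · intro j
      apply div_nonneg _ hBpos.le
      by_cases h : 0 < y j
      · exact mul_nonneg (hy j) (hbpos j h).le
      · have : y j = 0 := le_antisymm (not_lt.mp h) (hy j)
        rw [this]; simp
    · rw [← Finset.sum_div, ← hB, div_self hBpos.ne']
    · intro i j
      rw [hab i j, hwb]
      field_simp
end
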